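/- For every integer i ≥ 1 and every finite alphabet A with |A| ≥ 2, the maximum cardinality of a code C ⊆ (A⁴)ⁱ that is unambiguous (simultaneously for both terminals) for the Scenario-A.2 i-shot Butterfly channel, taken over all choices of per-round node functions, equals (|A| − 1)ⁱ. Equivalently, the i-shot capacity of the Butterfly Network when the adversary may change the attacked vulnerable edge each round is log_{|A|}(|A| − 1), the same as its one-shot capacity. -/
import Mathlib


/-- A code `C` is unambiguous for the channel `Ω` if distinct codewords have
disjoint fan-out sets. -/
def Unambiguous {X Y : Type*} (Ω : X → Set Y) (C : Finset X) : Prop :=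
  ∀ x ∈ C, ∀ y ∈ C, x ≠ y → Ω x ∩ Ω y = ∅

/-- One round of the Butterfly Network with node functions `f₁, f₂` (outputs
`(a₅,a₆)` resp. `(a₇,a₈)`), `f₃` (output `a₉`) and `f₄` (outputs `(a₁₀,a₁₁)`),
when the adversary attacks the (single) vulnerable edge indexed by
`e : Fin 7`, where `e = 0,1,2,3` stand for `e₁,e₂,e₃,e₄`, `e = 4` for `e₆`,
`e = 5` for `e₇` and `e = 6` for `e₉`.  The result collects the possible pairs
`(received by T₁, received by T₂)`. -/
def butterflyRound {A : Type*}
    (f₁ f₂ : A → A → A × A) (f₃ : A → A → A) (f₄ : A → A × A)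
    (x : Fin 4 → A) (e : Fin 7) : Set ((A × A) × (A × A)) :=
  { w | ∃ (y : Fin 4 → A) (b₆ b₇ b₉ : A),
      (∀ m : Fin 4, e.val < 4 → m.val ≠ e.val → y m = x m) ∧
      (4 ≤ e.val → y = x) ∧
      (e.val ≠ 4 → b₆ = (f₁ (y 0) (y 1)).2) ∧
      (e.val ≠ 5 → b₇ = (f₂ (y 2) (y 3)).1) ∧
      (e.val ≠ 6 → b₉ = f₃ b₆ b₇) ∧
      w = (((f₁ (y 0) (y 1)).1, (f₄ b₉).1),
           ((f₂ (y 2) (y 3)).2, (f₄ b₉).2)) }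

/-- Scenario A.2 `i`-shot Butterfly channel, as seen by terminal `T₁`: in each
round the adversary independently chooses at most one vulnerable edge to
corrupt, possibly different edges in different rounds. -/
def butterflyA2T1 {A : Type*} (i : ℕ)
    (f₁ f₂ : Fin i → A → A → A × A) (f₃ : Fin i → A → A → A)
    (f₄ : Fin i → A → A × A)
    (x : Fin i → Fin 4 → A) : Set (Fin i → A × A) :=
  { z | ∃ e : Fin i → Fin 7, ∃ w : Fin i → (A × A) × (A × A),
      (∀ j : Fin i, w j ∈ butterflyRound (f₁ j) (f₂ j) (f₃ j) (f₄ j) (x j) (e j)) ∧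
      (∀ j : Fin i, z j = (w j).1) }

/-- Scenario A.2 `i`-shot Butterfly channel, as seen by terminal `T₂`. -/
def butterflyA2T2 {A : Type*} (i : ℕ)
    (f₁ f₂ : Fin i → A → A → A × A) (f₃ : Fin i → A → A → A)
    (f₄ : Fin i → A → A × A)
    (x : Fin i → Fin 4 → A) : Set (Fin i → A × A) :=
  { z | ∃ e : Fin i → Fin 7, ∃ w : Fin i → (A × A) × (A × A),
      (∀ j : Fin i, w j ∈ butterflyRound (f₁ j) (f₂ j) (f₃ j) (f₄ j) (x j) (e j)) ∧
      (∀ j : Fin i, z j = (w j).2) }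

/-! ### Helper lemmas: particular attacks -/

section Helpers
variable {A : Type*} (f₁ f₂ : A → A → A × A) (f₃ : A → A → A) (f₄ : A → A × A)

/-- Attack on edge e₉: `b₉` is arbitrary. -/
lemma mem_round_e9 (x : Fin 4 → A) (b₉ : A) :
    (((f₁ (x 0) (x 1)).1, (f₄ b₉).1), ((f₂ (x 2) (x 3)).2, (f₄ b₉).2))
      ∈ butterflyRound f₁ f₂ f₃ f₄ x 6 := by
  exact ⟨x, (f₁ (x 0) (x 1)).2, (f₂ (x 2) (x 3)).1, b₉,
    by intro m h; exact absurd h (by decide), fun _ => rfl, fun _ => rfl, fun _ => rfl,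
    by intro h; exact absurd rfl h, rfl⟩

/-- Attack on edge e₂: the second source symbol is changed to `t`. -/
lemma mem_round_e2 (x : Fin 4 → A) (t : A) :
    (((f₁ (x 0) t).1, (f₄ (f₃ (f₁ (x 0) t).2 (f₂ (x 2) (x 3)).1)).1),
     ((f₂ (x 2) (x 3)).2, (f₄ (f₃ (f₁ (x 0) t).2 (f₂ (x 2) (x 3)).1)).2))
      ∈ butterflyRound f₁ f₂ f₃ f₄ x 1 := by
  refine ⟨fun m => if m = 1 then t else x m, _, _, _, ?_, ?_, fun _ => rfl,
    fun _ => rfl, fun _ => rfl, ?_⟩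
  · intro m _ hm
    have : m ≠ 1 := fun h => hm (by simp [h])
    simp [this]
  · intro h; exact absurd h (by decide)
  · simp [show (2:Fin 4) ≠ 1 from by decide, show (3:Fin 4) ≠ 1 from by decide,
      show (2:Fin 4) ≠ 0 from by decide, show (3:Fin 4) ≠ 0 from by decide]

/-- Attack on edge e₁: the first source symbol is changed to `t`. -/
lemma mem_round_e1 (x : Fin 4 → A) (t : A) :
    (((f₁ t (x 1)).1, (f₄ (f₃ (f₁ t (x 1)).2 (f₂ (x 2) (x 3)).1)).1),
     ((f₂ (x 2) (x 3)).2, (f₄ (f₃ (f₁ t (x 1)).2 (f₂ (x 2) (x 3)).1)).2))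
      ∈ butterflyRound f₁ f₂ f₃ f₄ x 0 := by
  refine ⟨fun m => if m = 0 then t else x m, _, _, _, ?_, ?_, fun _ => rfl,
    fun _ => rfl, fun _ => rfl, ?_⟩
  · intro m _ hm
    have : m ≠ 0 := fun h => hm (by simp [h])
    simp [this]
  · intro h; exact absurd h (by decide)
  · simp [show (2:Fin 4) ≠ 1 from by decide, show (3:Fin 4) ≠ 1 from by decide,
      show (2:Fin 4) ≠ 0 from by decide, show (3:Fin 4) ≠ 0 from by decide]

end Helpers

/-! ### Confusability at terminal `T₁` and the coloring lemma -/

section Conf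
variable {A : Type*} (f₁ f₂ : A → A → A × A) (f₃ : A → A → A) (f₄ : A → A × A)

/-- Two inputs are confusable at terminal `T₁` (their one-round fan-out sets
at `T₁` intersect). -/
def T1conf (u v : Fin 4 → A) : Prop :=
  ∃ e e' : Fin 7, ∃ w w' : (A × A) × (A × A),
    w ∈ butterflyRound f₁ f₂ f₃ f₄ u e ∧ w' ∈ butterflyRound f₁ f₂ f₃ f₄ v e' ∧
    w.1 = w'.1

lemma t1conf_of_phi {u v : Fin 4 → A}
    (h : (f₁ (u 0) (u 1)).1 = (f₁ (v 0) (v 1)).1) : T1conf f₁ f₂ f₃ f₄ u v := by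
  refine ⟨6, 6, _, _, mem_round_e9 f₁ f₂ f₃ f₄ u (u 0),
    mem_round_e9 f₁ f₂ f₃ f₄ v (u 0), ?_⟩
  simp [h]

/-- If changing the second input of `f₁` from `u`'s value can produce the
`e₅`-symbol of `v`, then `u` and `v` are confusable at `T₁` (attack `e₂` for
`u` and `e₉` for `v`). -/
lemma t1conf_of_row {u v : Fin 4 → A} (t : A)
    (h : (f₁ (u 0) t).1 = (f₁ (v 0) (v 1)).1) : T1conf f₁ f₂ f₃ f₄ u v := by
  refine ⟨1, 6, _, _, mem_round_e2 f₁ f₂ f₃ f₄ u t,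
    mem_round_e9 f₁ f₂ f₃ f₄ v (f₃ (f₁ (u 0) t).2 (f₂ (u 2) (u 3)).1), ?_⟩
  simp [h]

lemma t1conf_of_col {u v : Fin 4 → A} (t : A)
    (h : (f₁ t (u 1)).1 = (f₁ (v 0) (v 1)).1) : T1conf f₁ f₂ f₃ f₄ u v := by
  refine ⟨0, 6, _, _, mem_round_e1 f₁ f₂ f₃ f₄ u t,
    mem_round_e9 f₁ f₂ f₃ f₄ v (f₃ (f₁ t (u 1)).2 (f₂ (u 2) (u 3)).1), ?_⟩
  simp [h]

lemma t1conf_symm {u v : Fin 4 → A} (h : T1conf f₁ f₂ f₃ f₄ u v) :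
    T1conf f₁ f₂ f₃ f₄ v u := by
  obtain ⟨e, e', w, w', hw, hw', heq⟩ := h
  exact ⟨e', e, w', w, hw', hw, heq.symm⟩

/-- The key coloring lemma for the converse: there is a coloring of the inputs
with at most `|A| - 1` colors such that inputs with equal colors are confusable
at `T₁`. -/
lemma exists_coloring [Fintype A] (hA : 2 ≤ Fintype.card A) :
    ∃ (c : A) (ψ : (Fin 4 → A) → A), (∀ v, ψ v ≠ c) ∧
      ∀ u v, ψ u = ψ v → T1conf f₁ f₂ f₃ f₄ u v := by
  set h : A → A → A := fun s t => (f₁ s t).1 with hh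
  -- find a symbol `c` such that no input has both a constant-`c` row and a
  -- constant-`c` column through it
  have hc : ∃ c : A, ¬ ∃ s t, (∀ t', h s t' = c) ∧ (∀ s', h s' t = c) := by
    by_contra hcon
    push_neg at hcon
    have h1 : 1 < Fintype.card A := by omega
    obtain ⟨c, c', hne⟩ := Fintype.exists_pair_of_one_lt_card h1
    obtain ⟨s, t, hrow, _⟩ := hcon c
    obtain ⟨s', t', _, hcol⟩ := hcon c'
    exact hne ((hrow t').symm.trans (hcol s))
  obtain ⟨c, hc⟩ := hc
  -- for every input there is a color `≠ c` reachable by a row or column change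
  have key : ∀ v : Fin 4 → A, ∃ d, d ≠ c ∧
      (h (v 0) (v 1) = d ∨ (h (v 0) (v 1) = c ∧
        ((∃ t', h (v 0) t' = d) ∨ (∃ s', h s' (v 1) = d)))) := by
    intro v
    by_cases h0 : h (v 0) (v 1) = c
    · by_cases hr : ∃ t', h (v 0) t' ≠ c
      · obtain ⟨t', ht'⟩ := hr
        exact ⟨h (v 0) t', ht', Or.inr ⟨h0, Or.inl ⟨t', rfl⟩⟩⟩
      · push_neg at hr
        have hcol2 : ∃ s', h s' (v 1) ≠ c := by
          by_contra hcc
          push_neg at hcc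
          exact hc ⟨v 0, v 1, hr, hcc⟩
        obtain ⟨s', hs'⟩ := hcol2
        exact ⟨h s' (v 1), hs', Or.inr ⟨h0, Or.inr ⟨s', rfl⟩⟩⟩
    · exact ⟨h (v 0) (v 1), h0, Or.inl rfl⟩
  choose ψ hψc hψ using key
  refine ⟨c, ψ, hψc, fun u v huv => ?_⟩
  rcases hψ u with hu | ⟨hu0, hu⟩ <;> rcases hψ v with hv | ⟨hv0, hv⟩
  · exact t1conf_of_phi f₁ f₂ f₃ f₄ (hu.trans (huv.trans hv.symm))
  · rcases hv with ⟨t', ht'⟩ | ⟨s', hs'⟩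
    · exact t1conf_symm f₁ f₂ f₃ f₄ (t1conf_of_row f₁ f₂ f₃ f₄ t'
        (show h (v 0) t' = h (u 0) (u 1) from ht'.trans (huv.symm.trans hu.symm)))
    · exact t1conf_symm f₁ f₂ f₃ f₄ (t1conf_of_col f₁ f₂ f₃ f₄ s'
        (show h s' (v 1) = h (u 0) (u 1) from hs'.trans (huv.symm.trans hu.symm)))
  · rcases hu with ⟨t', ht'⟩ | ⟨s', hs'⟩
    · exact t1conf_of_row f₁ f₂ f₃ f₄ t'
        (show h (u 0) t' = h (v 0) (v 1) from ht'.trans (huv.trans hv.symm))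
    · exact t1conf_of_col f₁ f₂ f₃ f₄ s'
        (show h s' (u 1) = h (v 0) (v 1) from hs'.trans (huv.trans hv.symm))
  · exact t1conf_of_phi f₁ f₂ f₃ f₄ (hu0.trans hv0.symm)

end Conf

/-! ### The converse bound -/

section Upper
variable {A : Type*} [Fintype A] [DecidableEq A]

lemma card_le_of_unambiguousT1 (hA : 2 ≤ Fintype.card A) (i : ℕ)
    (f₁ f₂ : Fin i → A → A → A × A) (f₃ : Fin i → A → A → A)
    (f₄ : Fin i → A → A × A) (C : Finset (Fin i → Fin 4 → A))
    (hC : Unambiguous (butterflyA2T1 i f₁ f₂ f₃ f₄) C) :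
    C.card ≤ (Fintype.card A - 1) ^ i := by
  choose c ψ hψc hψ using fun j => exists_coloring (f₁ j) (f₂ j) (f₃ j) (f₄ j) hA
  set F : (Fin i → Fin 4 → A) → (Fin i → A) := fun x j => ψ j (x j) with hF
  have hinj : Set.InjOn F ↑C := by
    intro x hx y hy hxy
    by_contra hne
    have hconf : ∀ j, T1conf (f₁ j) (f₂ j) (f₃ j) (f₄ j) (x j) (y j) :=
      fun j => hψ j (x j) (y j) (congrFun hxy j)
    choose e e' w w' hw hw' heq using hconf
    have hmem : (fun j => (w j).1) ∈
        butterflyA2T1 i f₁ f₂ f₃ f₄ x ∩ butterflyA2T1 i f₁ f₂ f₃ f₄ y :=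
      ⟨⟨e, w, hw, fun j => rfl⟩, ⟨e', w', hw', fun j => heq j⟩⟩
    rw [hC x hx y hy hne] at hmem
    exact hmem
  have hsub : C.image F ⊆ Fintype.piFinset fun j => Finset.univ.erase (c j) := by
    intro g hg
    obtain ⟨x, _, rfl⟩ := Finset.mem_image.1 hg
    rw [Fintype.mem_piFinset]
    exact fun j => Finset.mem_erase.2 ⟨hψc j (x j), Finset.mem_univ _⟩
  calc C.card = (C.image F).card := (Finset.card_image_of_injOn hinj).symm
    _ ≤ (Fintype.piFinset fun j => Finset.univ.erase (c j)).card :=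
        Finset.card_le_card hsub
    _ = ∏ j : Fin i, (Finset.univ.erase (c j)).card := Fintype.card_piFinset _
    _ = (Fintype.card A - 1) ^ i := by
        simp [Finset.card_erase_of_mem, Finset.card_univ]

end Upper

/-! ### Achievability: the concrete scheme -/

section Ach
variable {A : Type*} [DecidableEq A]

/-- For the concrete coding scheme, the one-round fan-out of the constant
codeword `a ≠ c₀` is contained in `{(a, *)} ∪ {(c₀, a)}` at each terminal. -/
lemma round_bound (c₀ a : A) (ha : a ≠ c₀) (e : Fin 7) (w : (A × A) × (A × A))
    (hw : w ∈ butterflyRound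
      (fun s t => (if s = t then s else c₀, if s = t then s else c₀))
      (fun s t => (if s = t then s else c₀, if s = t then s else c₀))
      (fun b₆ b₇ => if b₆ = b₇ then b₆ else if b₆ = c₀ then b₇ else
        if b₇ = c₀ then b₆ else c₀)
      (fun b => (b, b)) (fun _ => a) e) :
    (w.1.1 = a ∨ (w.1.1 = c₀ ∧ w.1.2 = a)) ∧
    (w.2.1 = a ∨ (w.2.1 = c₀ ∧ w.2.2 = a)) := by
  obtain ⟨y, b₆, b₇, b₉, h1, h2, h3, h4, h5, rfl⟩ := hw
  dsimp only at h3 h4 h5 ⊢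
  fin_cases e
  · -- e₁ attacked
    have hy1 : y 1 = a := h1 1 (by decide) (by decide)
    have hy2 : y 2 = a := h1 2 (by decide) (by decide)
    have hy3 : y 3 = a := h1 3 (by decide) (by decide)
    have hb₆ := h3 (by decide)
    have hb₉ := h5 (by decide)
    have hb₇ := h4 (by decide)
    rw [hy2, hy3, if_pos rfl] at hb₇
    rw [hy1] at hb₆
    refine ⟨?_, Or.inl (by rw [hy2, hy3, if_pos rfl])⟩
    by_cases h0 : y 0 = a
    · exact Or.inl (by rw [hy1, h0, if_pos rfl])
    · refine Or.inr ⟨by rw [hy1, if_neg h0], ?_⟩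
      rw [hb₉, hb₆, hb₇, if_neg h0]
      simp [Ne.symm ha]
  · -- e₂ attacked
    have hy0 : y 0 = a := h1 0 (by decide) (by decide)
    have hy2 : y 2 = a := h1 2 (by decide) (by decide)
    have hy3 : y 3 = a := h1 3 (by decide) (by decide)
    have hb₆ := h3 (by decide)
    have hb₉ := h5 (by decide)
    have hb₇ := h4 (by decide)
    rw [hy2, hy3, if_pos rfl] at hb₇
    rw [hy0] at hb₆
    refine ⟨?_, Or.inl (by rw [hy2, hy3, if_pos rfl])⟩
    by_cases h0 : a = y 1
    · exact Or.inl (by rw [hy0, if_pos h0])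
    · refine Or.inr ⟨by rw [hy0, if_neg h0], ?_⟩
      rw [hb₉, hb₆, hb₇, if_neg h0]
      simp [Ne.symm ha]
  · -- e₃ attacked
    have hy0 : y 0 = a := h1 0 (by decide) (by decide)
    have hy1 : y 1 = a := h1 1 (by decide) (by decide)
    have hy3 : y 3 = a := h1 3 (by decide) (by decide)
    have hb₆ := h3 (by decide)
    have hb₉ := h5 (by decide)
    have hb₇ := h4 (by decide)
    rw [hy0, hy1, if_pos rfl] at hb₆
    rw [hy3] at hb₇
    refine ⟨Or.inl (by rw [hy0, hy1, if_pos rfl]), ?_⟩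
    by_cases h0 : y 2 = a
    · exact Or.inl (by rw [hy3, h0, if_pos rfl])
    · refine Or.inr ⟨by rw [hy3, if_neg h0], ?_⟩
      rw [hb₉, hb₆, hb₇, if_neg h0]
      simp [ha, Ne.symm ha]
  · -- e₄ attacked
    have hy0 : y 0 = a := h1 0 (by decide) (by decide)
    have hy1 : y 1 = a := h1 1 (by decide) (by decide)
    have hy2 : y 2 = a := h1 2 (by decide) (by decide)
    have hb₆ := h3 (by decide)
    have hb₉ := h5 (by decide)
    have hb₇ := h4 (by decide)
    rw [hy0, hy1, if_pos rfl] at hb₆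
    rw [hy2] at hb₇
    refine ⟨Or.inl (by rw [hy0, hy1, if_pos rfl]), ?_⟩
    by_cases h0 : a = y 3
    · exact Or.inl (by rw [hy2, if_pos h0])
    · refine Or.inr ⟨by rw [hy2, if_neg h0], ?_⟩
      rw [hb₉, hb₆, hb₇, if_neg h0]
      simp [ha, Ne.symm ha]
  · -- e₆ attacked
    have hy := h2 (by decide)
    subst hy
    exact ⟨Or.inl (if_pos rfl), Or.inl (if_pos rfl)⟩
  · -- e₇ attacked
    have hy := h2 (by decide)
    subst hy
    exact ⟨Or.inl (if_pos rfl), Or.inl (if_pos rfl)⟩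
  · -- e₉ attacked
    have hy := h2 (by decide)
    subst hy
    exact ⟨Or.inl (if_pos rfl), Or.inl (if_pos rfl)⟩

end Ach

/-- Scenario A.2 multishot capacity of the Butterfly Network: the maximum
cardinality of a code that is unambiguous for both terminals, over all choices
of per-round node functions, is `(|A| - 1)^i`. -/
theorem butterfly_A2_multishot_capacity
    (A : Type*) [Fintype A] [DecidableEq A] (hA : 2 ≤ Fintype.card A)
    (i : ℕ) (hi : 1 ≤ i) :
    IsGreatest { n : ℕ |
        ∃ (f₁ f₂ : Fin i → A → A → A × A) (f₃ : Fin i → A → A → A)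
          (f₄ : Fin i → A → A × A) (C : Finset (Fin i → Fin 4 → A)),
          Unambiguous (butterflyA2T1 i f₁ f₂ f₃ f₄) C ∧
          Unambiguous (butterflyA2T2 i f₁ f₂ f₃ f₄) C ∧ C.card = n }
      ((Fintype.card A - 1) ^ i) := by
  constructor
  · -- achievability
    have hne : Nonempty A := Fintype.card_pos_iff.mp (by omega)
    obtain ⟨c₀⟩ := hne
    set F₁ : A → A → A × A :=
      fun s t => (if s = t then s else c₀, if s = t then s else c₀) with hF₁
    set F₃ : A → A → A :=
      fun b₆ b₇ => if b₆ = b₇ then b₆ else if b₆ = c₀ then b₇ else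
        if b₇ = c₀ then b₆ else c₀ with hF₃
    set C : Finset (Fin i → Fin 4 → A) :=
      Finset.image (fun a : Fin i → A => fun j (_ : Fin 4) => a j)
        (Fintype.piFinset fun _ => Finset.univ.erase c₀) with hCdef
    have hmemC : ∀ x ∈ C, ∃ a : Fin i → A, (∀ j, a j ≠ c₀) ∧
        x = fun j (_ : Fin 4) => a j := by
      intro x hx
      obtain ⟨a, ha, rfl⟩ := Finset.mem_image.1 hx
      rw [Fintype.mem_piFinset] at ha
      exact ⟨a, fun j => (Finset.mem_erase.1 (ha j)).1, rfl⟩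
    refine ⟨fun _ => F₁, fun _ => F₁, fun _ => F₃, fun _ => fun b => (b, b), C,
      ?_, ?_, ?_⟩
    · -- unambiguous at T₁
      intro x hx y hy hxy
      obtain ⟨a, ha, rfl⟩ := hmemC x hx
      obtain ⟨a', ha', rfl⟩ := hmemC y hy
      have hane : a ≠ a' := by
        intro h; exact hxy (by rw [h])
      obtain ⟨j₀, hj₀⟩ := Function.ne_iff.1 hane
      rw [Set.eq_empty_iff_forall_notMem]
      rintro z ⟨⟨e, w, hw, hz⟩, ⟨e', w', hw', hz'⟩⟩
      have hb := (round_bound c₀ (a j₀) (ha j₀) (e j₀) (w j₀) (hw j₀)).1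
      have hb' := (round_bound c₀ (a' j₀) (ha' j₀) (e' j₀) (w' j₀) (hw' j₀)).1
      rw [← hz j₀] at hb
      rw [← hz' j₀] at hb'
      rcases hb with hb | ⟨hb, hb2⟩ <;> rcases hb' with hb' | ⟨hb', hb2'⟩
      · exact hj₀ (hb.symm.trans hb')
      · exact ha j₀ (hb.symm.trans hb')
      · exact ha' j₀ (hb'.symm.trans hb)
      · exact hj₀ (hb2.symm.trans hb2')
    · -- unambiguous at T₂
      intro x hx y hy hxy
      obtain ⟨a, ha, rfl⟩ := hmemC x hx
      obtain ⟨a', ha', rfl⟩ := hmemC y hy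
      have hane : a ≠ a' := by
        intro h; exact hxy (by rw [h])
      obtain ⟨j₀, hj₀⟩ := Function.ne_iff.1 hane
      rw [Set.eq_empty_iff_forall_notMem]
      rintro z ⟨⟨e, w, hw, hz⟩, ⟨e', w', hw', hz'⟩⟩
      have hb := (round_bound c₀ (a j₀) (ha j₀) (e j₀) (w j₀) (hw j₀)).2
      have hb' := (round_bound c₀ (a' j₀) (ha' j₀) (e' j₀) (w' j₀) (hw' j₀)).2
      rw [← hz j₀] at hb
      rw [← hz' j₀] at hb'
      rcases hb with hb | ⟨hb, hb2⟩ <;> rcases hb' with hb' | ⟨hb', hb2'⟩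
      · exact hj₀ (hb.symm.trans hb')
      · exact ha j₀ (hb.symm.trans hb')
      · exact ha' j₀ (hb'.symm.trans hb)
      · exact hj₀ (hb2.symm.trans hb2')
    · -- cardinality
      have hinj : Function.Injective
          (fun a : Fin i → A => fun j (_ : Fin 4) => a j) := by
        intro a b h
        funext j
        exact congrFun (congrFun h j) 0
      rw [hCdef, Finset.card_image_of_injective _ hinj, Fintype.card_piFinset]
      simp [Finset.card_erase_of_mem, Finset.card_univ]
  · -- converse
    rintro n ⟨f₁, f₂, f₃, f₄, C, h1, _, rfl⟩
    exact card_le_of_unambiguousT1 hA i f₁ f₂ f₃ f₄ C h1
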